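/- Let p >= 5 be prime such that -1 is a square in F_p, and let \lambda in F_p \ {0,1} be a fourth power such that \lambda - 1 is not a square in F_p. Then the group E_\lambda(F_p) of F_p-points of the Legendre curve E_\lambda : y^2 = x(x-1)(x-\lambda) contains a subgroup isomorphic to Z/2Z x Z/8Z but contains no subgroup isomorphic to Z/4Z x Z/4Z. -/

import Mathlib

/-- The Legendre curve `y² = x(x - 1)(x - λ)` in Weierstrass form. -/
def legendreCurve (K : Type*) [Field K] (lam : K) : WeierstrassCurve.Affine K :=
  { a₁ := 0, a₂ := -(1 + lam), a₃ := 0, a₄ := lam, a₆ := 0 }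

namespace LegendreAux

open WeierstrassCurve.Affine WeierstrassCurve.Affine.Point

variable {F : Type*} [Field F]

lemma some_helper {W : WeierstrassCurve.Affine F} {x₁ y₁ x₂ y₂ : F}
    (h₁ : W.Nonsingular x₁ y₁) (h₂ : W.Nonsingular x₂ y₂) (hx : x₁ = x₂) (hy : y₁ = y₂) :
    Point.some _ _ h₁ = Point.some _ _ h₂ := by subst hx; subst hy; rfl

lemma nonsq_mul [Fintype F] [DecidableEq F] {a b : F} (ha : a ≠ 0) (hb : b ≠ 0)
    (h1 : ¬IsSquare a) (h2 : ¬IsSquare b) : IsSquare (a * b) := by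
  have c1 := (quadraticChar_neg_one_iff_not_isSquare (F := F)).mpr h1
  have c2 := (quadraticChar_neg_one_iff_not_isSquare (F := F)).mpr h2
  have hq : quadraticChar F (a * b) = 1 := by rw [map_mul, c1, c2]; ring
  exact (quadraticChar_one_iff_isSquare (mul_ne_zero ha hb)).mp hq

/-- The point `Q` is on the Legendre curve. -/
lemma idA (d u i : F) (hu : u^2 = d^2 - 1) (hi : i^2 = -1) :
    ((d+u)*(u+i*d*u)*(i*d*u+d))^2 =
      ((d+u)*(d+i*d*u))^3 - (1+d^4)*((d+u)*(d+i*d*u))^2 + d^4*((d+u)*(d+i*d*u)) := by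
  linear_combination (d^2*u^2 + (2 : F)*d^2*u^3*i + d^2*u^4*i^2 + d^3*i + d^3*i^3 + d^3*u + (-1 : F)*d^3*u*i^2 + (3 : F)*d^3*u^2*i + (-1 : F)*d^3*u^2*i^3 + (3 : F)*d^3*u^3*i^2 + d^3*u^4*i^3 + (-1 : F)*d^4 + (-1 : F)*d^4*i^2 + d^4*i^4 + (-1 : F)*d^4*u*i + (-3 : F)*d^4*u*i^3 + (2 : F)*d^4*u^2*i^2 + (-1 : F)*d^4*u^2*i^4 + (3 : F)*d^4*u^3*i^3 + d^4*u^4*i^4 + (-5 : F)*d^5*i + (-5 : F)*d^5*i^3 + (-2 : F)*d^5*u*i^4 + (4 : F)*d^5*u^2*i^3 + (2 : F)*d^5*u^3*i^4 + d^6 + (-1 : F)*d^6*i^2 + (-3 : F)*d^6*i^4 + (2 : F)*d^6*u*i + (4 : F)*d^6*u*i^3 + d^6*u^2*i^2 + (2 : F)*d^6*u^2*i^4 + (4 : F)*d^7*i + (4 : F)*d^7*i^3 + (2 : F)*d^7*u*i^2 + (2 : F)*d^7*u*i^4 + (2 : F)*d^8*i^2 + (2 : F)*d^8*i^4) * hu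 + ((-1 : F)*d^3*i + d^3*u + (2 : F)*d^4 + (-1 : F)*d^4*i^2 + (3 : F)*d^4*u*i + (6 : F)*d^5*i + (-3 : F)*d^5*u + (2 : F)*d^5*u*i^2 + (-4 : F)*d^6 + (4 : F)*d^6*i^2 + (-7 : F)*d^6*u*i + (-9 : F)*d^7*i + (2 : F)*d^7*u + (-4 : F)*d^7*u*i^2 + (2 : F)*d^8 + (-5 : F)*d^8*i^2 + (4 : F)*d^8*u*i + (4 : F)*d^9*i + (2 : F)*d^9*u*i^2 + (2 : F)*d^10*i^2) * hi

/-- Key doubling identity: `(x_Q² - λ)² = d²·(2 y_Q)²`. -/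
lemma idG (d u i : F) (hu : u^2 = d^2 - 1) (hi : i^2 = -1) :
    (((d+u)*(d+i*d*u))^2 - d^4)^2 = d^2 * (2*((d+u)*(u+i*d*u)*(i*d*u+d)))^2 := by
  linear_combination ((3 : F)*d^4 + (2 : F)*d^4*i^2 + (-1 : F)*d^4*i^4 + (4 : F)*d^4*u*i + (4 : F)*d^4*u*i^3 + (-3 : F)*d^4*u^2 + (-2 : F)*d^4*u^2*i^2 + d^4*u^2*i^4 + (-4 : F)*d^4*u^3*i + (-4 : F)*d^4*u^3*i^3 + (2 : F)*d^4*u^4*i^2 + (-1 : F)*d^4*u^4*i^4 + (4 : F)*d^4*u^5*i^3 + d^4*u^6*i^4 + (8 : F)*d^5*i + (8 : F)*d^5*i^3 + (-4 : F)*d^5*u + (4 : F)*d^5*u*i^4 + (-8 : F)*d^5*u^2*i + (-8 : F)*d^5*u^2*i^3 + (-4 : F)*d^5*u^3*i^4 + (8 : F)*d^5*u^4*i^3 + (4 : F)*d^5*u^5*i^4 + (-3 : F)*d^6 + (2 : F)*d^6*i^2 + (5 : F)*d^6*i^4 + (-8 : F)*d^6*u*i + (-8 : F)*d^6*u*i^3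 + (-4 : F)*d^6*u^2*i^2 + (-4 : F)*d^6*u^2*i^4 + (4 : F)*d^6*u^3*i^3 + (3 : F)*d^6*u^4*i^4 + (-8 : F)*d^7*i + (-8 : F)*d^7*i^3 + (-4 : F)*d^7*u*i^2 + (-4 : F)*d^7*u*i^4 + (-4 : F)*d^8*i^2 + (-4 : F)*d^8*i^4) * hu + ((-3 : F)*d^4 + d^4*i^2 + (-4 : F)*d^4*u*i + (-8 : F)*d^5*i + (4 : F)*d^5*u + (-4 : F)*d^5*u*i^2 + (6 : F)*d^6 + (-6 : F)*d^6*i^2 + (12 : F)*d^6*u*i + (16 : F)*d^7*i + (-4 : F)*d^7*u + (8 : F)*d^7*u*i^2 + (-3 : F)*d^8 + (9 : F)*d^8*i^2 + (-8 : F)*d^8*u*i + (-8 : F)*d^9*i + (-4 : F)*d^9*u*i^2 + (-4 : F)*d^10*i^2) * hi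

end LegendreAux

theorem stmt_13 (p : ℕ) [Fact p.Prime] (hp : 5 ≤ p) (hsq : IsSquare (-1 : ZMod p))
    (lam : ZMod p) (h0 : lam ≠ 0) (h1 : lam ≠ 1) (h4 : ∃ c : ZMod p, c ^ 4 = lam)
    (hns : ¬IsSquare (lam - 1)) :
    (∃ f : ZMod 2 × ZMod 8 →+ (legendreCurve (ZMod p) lam).Point, Function.Injective f) ∧
      ¬∃ f : ZMod 4 × ZMod 4 →+ (legendreCurve (ZMod p) lam).Point, Function.Injective f := by

  classical
  obtain ⟨i, hi⟩ := hsq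
  have hi2 : i ^ 2 = -1 := by rw [sq]; exact hi.symm
  obtain ⟨c, hc⟩ := h4
  have hpp : p.Prime := Fact.out
  have hne2 : (2 : ZMod p) ≠ 0 := by
    have : ((2 : ℕ) : ZMod p) ≠ 0 := by
      rw [Ne, ZMod.natCast_eq_zero_iff]
      intro hdvd
      have := Nat.le_of_dvd (by norm_num) hdvd
      omega
    simpa using this
  have hine : i ≠ 0 := by
    intro h; rw [h] at hi2; simp at hi2
  have hcne : c ≠ 0 := by intro h; apply h0; rw [← hc, h]; ring
  -- choose d with d⁴ = lam and d² - 1 a square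
  have hdex : ∃ d v : ZMod p, d ^ 4 = lam ∧ v ^ 2 = d ^ 2 - 1 := by
    by_cases hA : IsSquare (c ^ 2 - 1)
    · obtain ⟨v, hv⟩ := hA
      exact ⟨c, v, hc, by rw [sq]; exact hv.symm⟩
    · by_cases hB : IsSquare ((i * c) ^ 2 - 1)
      · obtain ⟨v, hv⟩ := hB
        refine ⟨i * c, v, ?_, by rw [sq]; exact hv.symm⟩
        have : (i * c) ^ 4 = i ^ 4 * c ^ 4 := by ring
        rw [this, hc, show (i:ZMod p) ^ 4 = (i^2)^2 by ring, hi2]; ring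
      · exfalso
        have ha : c ^ 2 - 1 ≠ 0 := by
          intro h; apply h1; rw [← hc]
          have : c ^ 2 = 1 := by linear_combination h
          rw [show (c:ZMod p)^4 = (c^2)^2 by ring, this]; ring
        have hb : (i * c) ^ 2 - 1 ≠ 0 := by
          intro h; apply h1; rw [← hc]
          have h2 : c ^ 2 = -1 := by linear_combination -h + c^2 * hi2
          rw [show (c:ZMod p)^4 = (c^2)^2 by ring, h2]; ring
        have hS := LegendreAux.nonsq_mul ha hb hA hB
        obtain ⟨s, hs⟩ := hS
        apply hns
        refine ⟨i * s, ?_⟩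
        have : (c ^ 2 - 1) * ((i * c) ^ 2 - 1) = 1 - lam := by
          rw [← hc]; linear_combination (c^4 - c^2) * hi2
        rw [this] at hs
        linear_combination -hs - (s*s) * hi2
  obtain ⟨d, u, hd4, hu⟩ := hdex
  have hdne : d ≠ 0 := by intro h; apply h0; rw [← hd4, h]; ring
  have hd2ne1 : d ^ 2 ≠ 1 := by
    intro h; apply h1; rw [← hd4, show (d:ZMod p)^4 = (d^2)^2 by ring, h]; ring
  have hd2nem1 : d ^ 2 ≠ -1 := by
    intro h; apply h1; rw [← hd4, show (d:ZMod p)^4 = (d^2)^2 by ring, h]; ring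
  have hune : u ≠ 0 := by
    intro h; rw [h] at hu; apply hd2ne1; linear_combination -hu
  set W : WeierstrassCurve.Affine (ZMod p) := legendreCurve (ZMod p) lam with hWdef
  have ha1 : W.a₁ = 0 := rfl
  have ha2 : W.a₂ = -(1 + lam) := rfl
  have ha3 : W.a₃ = 0 := rfl
  have ha4 : W.a₄ = lam := rfl
  have ha6 : W.a₆ = 0 := rfl
  have hnegY : ∀ x y : ZMod p, W.negY x y = -y := by
    intro x y; rw [WeierstrassCurve.Affine.negY, ha1, ha3]; ring
  have hEq : ∀ x y : ZMod p, W.Equation x y ↔ y ^ 2 = x ^ 3 - (1 + lam) * x ^ 2 + lam * x := by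
    intro x y
    rw [WeierstrassCurve.Affine.equation_iff, ha1, ha2, ha3, ha4, ha6]
    constructor <;> intro h <;> linear_combination h
  have hNS : ∀ x y : ZMod p, y ≠ 0 → y ^ 2 = x ^ 3 - (1 + lam) * x ^ 2 + lam * x →
      W.Nonsingular x y := by
    intro x y hy he
    rw [WeierstrassCurve.Affine.nonsingular_iff]
    refine ⟨(hEq x y).mpr he, Or.inr ?_⟩
    rw [ha1, ha3]
    intro hcon; apply hy
    have h2y : 2 * y = 0 := by linear_combination hcon
    rcases mul_eq_zero.mp h2y with h' | h'
    · exact absurd h' hne2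
    · exact h'
  have hns0 : W.Nonsingular 0 0 := by
    rw [WeierstrassCurve.Affine.nonsingular_iff]
    refine ⟨(hEq 0 0).mpr (by ring), Or.inl ?_⟩
    rw [ha1, ha2, ha4]
    intro hcon; exact h0 (by linear_combination -hcon)
  have hns1 : W.Nonsingular 1 0 := by
    rw [WeierstrassCurve.Affine.nonsingular_iff]
    refine ⟨(hEq 1 0).mpr (by ring), Or.inl ?_⟩
    rw [ha1, ha2, ha4]
    intro hcon; exact h1 (by linear_combination hcon)
  have hnsl : W.Nonsingular lam 0 := by
    rw [WeierstrassCurve.Affine.nonsingular_iff]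
    refine ⟨(hEq lam 0).mpr (by ring), Or.inl ?_⟩
    rw [ha1, ha2, ha4]
    intro hcon
    have : lam * (lam - 1) = 0 := by linear_combination -hcon
    rcases mul_eq_zero.mp this with h' | h'
    · exact h0 h'
    · exact h1 (by linear_combination h')
  have hyne : ∀ x y : ZMod p, y ≠ 0 → y ≠ W.negY x y := by
    intro x y hy
    rw [hnegY]
    intro hcon; apply hy
    have h2y : 2 * y = 0 := by linear_combination hcon
    rcases mul_eq_zero.mp h2y with h' | h'
    · exact absurd h' hne2
    · exact h'
  have hslope : ∀ x y : ZMod p, y ≠ 0 →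
      W.slope x x y y = (3 * x ^ 2 - 2 * (1 + lam) * x + lam) / (2 * y) := by
    intro x y hy
    rw [WeierstrassCurve.Affine.slope_of_Y_ne rfl (hyne x y hy), hnegY, ha1, ha2, ha4]
    rw [show y - -y = 2 * y by ring]
    congr 1; ring
  have hlmul : ∀ x y : ZMod p, y ≠ 0 →
      W.slope x x y y * (2 * y) = 3 * x ^ 2 - 2 * (1 + lam) * x + lam := by
    intro x y hy
    rw [hslope x y hy]
    field_simp
  have haddX : ∀ x y : ZMod p, y ≠ 0 → W.Equation x y →
      W.addX x x (W.slope x x y y) * (2 * y) ^ 2 = (x ^ 2 - lam) ^ 2 := by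
    intro x y hy he
    have hE := (hEq x y).mp he
    have hl := hlmul x y hy
    rw [WeierstrassCurve.Affine.addX, ha1, ha2]
    linear_combination (W.slope x x y y * (2 * y) + (3 * x ^ 2 - 2 * (1 + lam) * x + lam)) * hl +
      (4 + 4 * lam - 8 * x) * hE
  -- torsion classification
  have htors : ∀ X : W.Point, X + X = 0 →
      X = 0 ∨ X = WeierstrassCurve.Affine.Point.some _ _ hns0 ∨ X = WeierstrassCurve.Affine.Point.some _ _ hns1 ∨ X = WeierstrassCurve.Affine.Point.some _ _ hnsl := by
    intro X hX
    rcases X with _ | @⟨x, y, h⟩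
    · left; rfl
    · right
      by_cases hy : y = W.negY x y
      · have hy0 : y = 0 := by
          rw [hnegY] at hy
          have h2y : 2 * y = 0 := by linear_combination hy
          rcases mul_eq_zero.mp h2y with h' | h'
          · exact absurd h' hne2
          · exact h'
        subst hy0
        have he := (hEq x 0).mp h.1
        have hfac : x * (x - 1) * (x - lam) = 0 := by linear_combination -he
        rcases mul_eq_zero.mp hfac with h' | h'
        · rcases mul_eq_zero.mp h' with h'' | h''
          · exact Or.inl (LegendreAux.some_helper _ _ h'' rfl)
          · exact Or.inr (Or.inl (LegendreAux.some_helper _ _ (by linear_combination h'') rfl))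
        · exact Or.inr (Or.inr (LegendreAux.some_helper _ _ (by linear_combination h') rfl))
      · exfalso
        rw [WeierstrassCurve.Affine.Point.add_self_of_Y_ne hy] at hX
        exact WeierstrassCurve.Affine.Point.some_ne_zero _ hX
  -- (1,0) is not divisible by 2
  have hnohalf : ∀ X : W.Point, X + X ≠ WeierstrassCurve.Affine.Point.some _ _ hns1 := by
    intro X hX
    rcases X with _ | @⟨x, y, h⟩
    · rw [← WeierstrassCurve.Affine.Point.zero_def] at hX
      rw [add_zero] at hX
      exact WeierstrassCurve.Affine.Point.some_ne_zero _ hX.symm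
    · by_cases hy : y = W.negY x y
      · rw [WeierstrassCurve.Affine.Point.add_self_of_Y_eq hy] at hX
        exact WeierstrassCurve.Affine.Point.some_ne_zero _ hX.symm
      · rw [WeierstrassCurve.Affine.Point.add_self_of_Y_ne hy] at hX
        have hyne0 : y ≠ 0 := by
          intro h0'; apply hy; rw [hnegY, h0']; ring
        injection hX with hx1 hy1
        have hE := (hEq x y).mp h.1
        have hax := haddX x y hyne0 h.1
        rw [hx1, one_mul] at hax
        have h6 : (x ^ 2 - 2 * lam * x + lam) ^ 2 = (1 - lam) * (2 * y) ^ 2 := by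
          linear_combination 4 * lam * hE - hax
        have h2y : (2 : ZMod p) * y ≠ 0 := mul_ne_zero hne2 hyne0
        apply hns
        refine ⟨i * (x ^ 2 - 2 * lam * x + lam) / (2 * y), ?_⟩
        rw [div_mul_div_comm, eq_div_iff (mul_ne_zero h2y h2y)]
        linear_combination (-(x ^ 2 - 2 * lam * x + lam) ^ 2) * hi2 + h6
  -- the point Q
  have hyqne : ((d+u)*(u+i*d*u)*(i*d*u+d)) ≠ 0 := by
    rw [show ((d+u)*(u+i*d*u)*(i*d*u+d)) = (d+u) * (u*(1+i*d)) * (d*(i*u+1)) by ring]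
    have h1' : d + u ≠ 0 := by
      intro h'
      have hud : u = -d := by linear_combination h'
      rw [hud] at hu
      have : (1 : ZMod p) = 0 := by linear_combination hu
      exact one_ne_zero this
    have h2' : 1 + i * d ≠ 0 := by
      intro h'
      apply hd2nem1
      have h'' : (i * d) ^ 2 = 1 := by
        rw [show i * d = -1 by linear_combination h']; ring
      linear_combination -h'' + d ^ 2 * hi2
    have h3' : i * u + 1 ≠ 0 := by
      intro h'
      apply hdne
      have h'' : (i * u) ^ 2 = 1 := by
        rw [show i * u = -1 by linear_combination h']; ring
      have hd2 : d ^ 2 = 0 := by linear_combination -h'' + u ^ 2 * hi2 - hu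
      exact pow_eq_zero_iff (by norm_num) |>.mp hd2
    exact mul_ne_zero (mul_ne_zero h1' (mul_ne_zero hune h2')) (mul_ne_zero hdne h3')
  have hQeqn0 := LegendreAux.idA d u i hu hi2
  rw [hd4] at hQeqn0
  have hQns : W.Nonsingular ((d+u)*(d+i*d*u)) ((d+u)*(u+i*d*u)*(i*d*u+d)) :=
    hNS _ _ hyqne (by linear_combination hQeqn0)
  -- halving the two-torsion point (0,0): any point with x-coordinate d² doubles to (0,0)
  have hL1 : ∀ (x y : ZMod p) (h : W.Nonsingular x y), x = d ^ 2 →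
      WeierstrassCurve.Affine.Point.some _ _ h + WeierstrassCurve.Affine.Point.some _ _ h = WeierstrassCurve.Affine.Point.some _ _ hns0 := by
    intro x y h hx
    subst hx
    have he := (hEq _ _).mp h.1
    rw [← hd4] at he
    have hy2 : y ^ 2 = -(d ^ 4 * (d ^ 2 - 1) ^ 2) := by linear_combination he
    have hyne0 : y ≠ 0 := by
      intro h0'
      rw [h0'] at hy2
      have hz : d ^ 4 * (d ^ 2 - 1) ^ 2 = 0 := by linear_combination hy2
      rcases mul_eq_zero.mp hz with h' | h'
      · exact hdne (pow_eq_zero_iff (by norm_num) |>.mp h')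
      · exact hd2ne1 (by linear_combination (pow_eq_zero_iff (by norm_num : (2:ℕ) ≠ 0)).mp h')
    have hl := hlmul (d ^ 2) y hyne0
    rw [← hd4] at hl
    have hxadd : W.addX (d ^ 2) (d ^ 2) (W.slope (d ^ 2) (d ^ 2) y y) = 0 := by
      have ha' := haddX (d ^ 2) y hyne0 h.1
      rw [show ((d ^ 2) ^ 2 - lam) ^ 2 = 0 by rw [← hd4]; ring] at ha'
      rcases mul_eq_zero.mp ha' with h' | h'
      · exact h'
      · exact absurd h' (pow_ne_zero 2 (mul_ne_zero hne2 hyne0))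
    have hld : W.slope (d ^ 2) (d ^ 2) y y * d ^ 2 - y = 0 := by
      have hkey : (W.slope (d ^ 2) (d ^ 2) y y * d ^ 2 - y) * (2 * y) = 0 := by
        linear_combination d ^ 2 * hl - 2 * hy2
      rcases mul_eq_zero.mp hkey with h' | h'
      · exact h'
      · exact absurd h' (mul_ne_zero hne2 hyne0)
    have hyadd : W.addY (d ^ 2) (d ^ 2) y (W.slope (d ^ 2) (d ^ 2) y y) = 0 := by
      rw [WeierstrassCurve.Affine.addY, WeierstrassCurve.Affine.negAddY, hxadd, hnegY]
      linear_combination hld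
    rw [WeierstrassCurve.Affine.Point.add_self_of_Y_ne (hyne _ _ hyne0)]
    exact LegendreAux.some_helper _ _ hxadd hyadd
  have hyne' := hyne ((d+u)*(d+i*d*u)) ((d+u)*(u+i*d*u)*(i*d*u+d)) hyqne
  have hQQ : WeierstrassCurve.Affine.Point.some _ _ hQns + WeierstrassCurve.Affine.Point.some _ _ hQns =
      WeierstrassCurve.Affine.Point.some _ _ (WeierstrassCurve.Affine.nonsingular_add hQns hQns (fun hxy => hyne' hxy.right)) :=
    WeierstrassCurve.Affine.Point.add_self_of_Y_ne hyne'
  have hxmid : W.addX ((d+u)*(d+i*d*u)) ((d+u)*(d+i*d*u)) (W.slope ((d+u)*(d+i*d*u)) ((d+u)*(d+i*d*u)) ((d+u)*(u+i*d*u)*(i*d*u+d)) ((d+u)*(u+i*d*u)*(i*d*u+d))) = d ^ 2 := by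
    have ha' := haddX ((d+u)*(d+i*d*u)) ((d+u)*(u+i*d*u)*(i*d*u+d)) hyqne hQns.1
    have hg := LegendreAux.idG d u i hu hi2
    rw [hd4] at hg
    exact mul_right_cancel₀ (pow_ne_zero 2 (mul_ne_zero hne2 hyqne)) (ha'.trans hg)
  have hT2 : WeierstrassCurve.Affine.Point.some _ _ hns1 + WeierstrassCurve.Affine.Point.some _ _ hns1 = (0 : W.Point) :=
    WeierstrassCurve.Affine.Point.add_self_of_Y_eq (by rw [hnegY]; ring)
  have hP02 : WeierstrassCurve.Affine.Point.some _ _ hns0 + WeierstrassCurve.Affine.Point.some _ _ hns0 = (0 : W.Point) :=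
    WeierstrassCurve.Affine.Point.add_self_of_Y_eq (by rw [hnegY]; ring)
  have h4Q : (4 : ℕ) • (WeierstrassCurve.Affine.Point.some _ _ hQns : W.Point) = WeierstrassCurve.Affine.Point.some _ _ hns0 := by
    rw [show (4 : ℕ) = 2 * 2 from rfl, mul_smul, two_smul, two_smul, hQQ]
    exact hL1 _ _ _ hxmid
  have h8Q : (8 : ℕ) • (WeierstrassCurve.Affine.Point.some _ _ hQns : W.Point) = 0 := by
    rw [show (8 : ℕ) = 2 * 4 from rfl, mul_smul, h4Q, two_smul]
    exact hP02
  have h4Qne : (4 : ℕ) • (WeierstrassCurve.Affine.Point.some _ _ hQns : W.Point) ≠ 0 := by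
    rw [h4Q]; exact WeierstrassCurve.Affine.Point.some_ne_zero _
  haveI : Fact (Nat.Prime 2) := ⟨Nat.prime_two⟩
  have hord : addOrderOf (WeierstrassCurve.Affine.Point.some _ _ hQns : W.Point) = 8 := by
    have e1 : ¬((2 : ℕ) ^ 2) • (WeierstrassCurve.Affine.Point.some _ _ hQns : W.Point) = 0 := by
      rw [show ((2 : ℕ) ^ 2) = 4 by norm_num]; exact h4Qne
    have e2 : ((2 : ℕ) ^ (2 + 1)) • (WeierstrassCurve.Affine.Point.some _ _ hQns : W.Point) = 0 := by
      rw [show ((2 : ℕ) ^ (2 + 1)) = 8 by norm_num]; exact h8Q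
    have := addOrderOf_eq_prime_pow e1 e2
    rw [this]; norm_num
  have hQmul : ∀ k : ℕ, k • (WeierstrassCurve.Affine.Point.some _ _ hQns : W.Point) = 0 → (8 : ℕ) ∣ k := by
    intro k hk
    have := addOrderOf_dvd_iff_nsmul_eq_zero.mpr hk
    rwa [hord] at this
  have hTne0 : (WeierstrassCurve.Affine.Point.some _ _ hns1 : W.Point) ≠ 0 := WeierstrassCurve.Affine.Point.some_ne_zero _
  have hTneP0 : (WeierstrassCurve.Affine.Point.some _ _ hns1 : W.Point) ≠ WeierstrassCurve.Affine.Point.some _ _ hns0 := by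
    intro hcon
    injection hcon with hx' hy'
    exact one_ne_zero hx'
  have hnegP0 : -(WeierstrassCurve.Affine.Point.some _ _ hns0 : W.Point) = WeierstrassCurve.Affine.Point.some _ _ hns0 := by
    rw [WeierstrassCurve.Affine.Point.neg_some]
    exact LegendreAux.some_helper _ _ rfl (by rw [hnegY]; ring)
  have hT2' : zmultiplesHom W.Point (WeierstrassCurve.Affine.Point.some _ _ hns1) (((2 : ℕ) : ℤ)) = 0 := by
    rw [zmultiplesHom_apply, natCast_zsmul, two_smul]
    exact hT2
  have hQ8' : zmultiplesHom W.Point (WeierstrassCurve.Affine.Point.some _ _ hQns) (((8 : ℕ) : ℤ)) = 0 := by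
    rw [zmultiplesHom_apply, natCast_zsmul]
    exact h8Q
  have hgval : ∀ m : ZMod 2,
      (ZMod.lift 2 ⟨zmultiplesHom W.Point (WeierstrassCurve.Affine.Point.some _ _ hns1), hT2'⟩ : ZMod 2 →+ W.Point) m
        = m.val • (WeierstrassCurve.Affine.Point.some _ _ hns1 : W.Point) := by
    intro m
    conv_lhs => rw [← ZMod.natCast_rightInverse m]
    rw [show ((m.val : ℕ) : ZMod 2) = ((m.val : ℤ) : ZMod 2) by push_cast; rfl]
    rw [ZMod.lift_coe]
    rw [zmultiplesHom_apply, natCast_zsmul]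
  have hhval : ∀ n : ZMod 8,
      (ZMod.lift 8 ⟨zmultiplesHom W.Point (WeierstrassCurve.Affine.Point.some _ _ hQns), hQ8'⟩ : ZMod 8 →+ W.Point) n
        = n.val • (WeierstrassCurve.Affine.Point.some _ _ hQns : W.Point) := by
    intro n
    conv_lhs => rw [← ZMod.natCast_rightInverse n]
    rw [show ((n.val : ℕ) : ZMod 8) = ((n.val : ℤ) : ZMod 8) by push_cast; rfl]
    rw [ZMod.lift_coe]
    rw [zmultiplesHom_apply, natCast_zsmul]
  constructor
  · refine ⟨AddMonoidHom.coprod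
      (ZMod.lift 2 ⟨zmultiplesHom W.Point (WeierstrassCurve.Affine.Point.some _ _ hns1), hT2'⟩)
      (ZMod.lift 8 ⟨zmultiplesHom W.Point (WeierstrassCurve.Affine.Point.some _ _ hQns), hQ8'⟩), ?_⟩
    rw [injective_iff_map_eq_zero]
    rintro ⟨m, n⟩ hmn
    rw [AddMonoidHom.coprod_apply] at hmn
    simp only at hmn
    rw [hgval m, hhval n] at hmn
    have hm2 : m.val < 2 := ZMod.val_lt m
    have hn8 : n.val < 8 := ZMod.val_lt n
    have hmn0 : m.val = 0 ∧ n.val = 0 := by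
      by_cases hm0 : m.val = 0
      · refine ⟨hm0, ?_⟩
        rw [hm0, zero_nsmul, zero_add] at hmn
        have := hQmul _ hmn
        omega
      · exfalso
        have hm1 : m.val = 1 := by omega
        rw [hm1, one_nsmul] at hmn
        have hnQ : n.val • (WeierstrassCurve.Affine.Point.some _ _ hQns : W.Point) = -(WeierstrassCurve.Affine.Point.some _ _ hns1) :=
          eq_neg_of_add_eq_zero_right hmn
        have h2k : (2 * n.val) • (WeierstrassCurve.Affine.Point.some _ _ hQns : W.Point) = 0 := by
          rw [two_mul, add_nsmul, hnQ]
          rw [show -(WeierstrassCurve.Affine.Point.some _ _ hns1 : W.Point) + -(WeierstrassCurve.Affine.Point.some _ _ hns1) =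
            -((WeierstrassCurve.Affine.Point.some _ _ hns1 : W.Point) + WeierstrassCurve.Affine.Point.some _ _ hns1) by abel, hT2, neg_zero]
        have hdvd := hQmul _ h2k
        have hn04 : n.val = 0 ∨ n.val = 4 := by omega
        rcases hn04 with h' | h'
        · rw [h', zero_nsmul] at hnQ
          exact hTne0 (neg_eq_zero.mp hnQ.symm)
        · rw [h', h4Q] at hnQ
          have h'' : (WeierstrassCurve.Affine.Point.some _ _ hns1 : W.Point) = -(WeierstrassCurve.Affine.Point.some _ _ hns0) := by
            rw [hnQ, neg_neg]
          rw [hnegP0] at h''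
          exact hTneP0 h''
    have hmz : m = 0 := by
      have := ZMod.natCast_rightInverse m
      rw [hmn0.1] at this; simpa using this.symm
    have hnz : n = 0 := by
      have := ZMod.natCast_rightInverse n
      rw [hmn0.2] at this; simpa using this.symm
    rw [hmz, hnz]; rfl
  · rintro ⟨f, hf⟩
    have hmap : ∀ s t : ZMod 4 × ZMod 4, f s + f t = f (s + t) := fun s t => (map_add f s t).symm
    have hAA : f (2, 0) + f (2, 0) = 0 := by
      rw [hmap, show ((2, 0) + (2, 0) : ZMod 4 × ZMod 4) = 0 by decide, map_zero]
    have hBB : f (0, 2) + f (0, 2) = 0 := by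
      rw [hmap, show ((0, 2) + (0, 2) : ZMod 4 × ZMod 4) = 0 by decide, map_zero]
    have hCC : f (2, 2) + f (2, 2) = 0 := by
      rw [hmap, show ((2, 2) + (2, 2) : ZMod 4 × ZMod 4) = 0 by decide, map_zero]
    have hA0 : f (2, 0) ≠ 0 := by
      rw [← map_zero f]
      exact fun hcon => absurd (hf hcon) (by decide)
    have hB0 : f (0, 2) ≠ 0 := by
      rw [← map_zero f]
      exact fun hcon => absurd (hf hcon) (by decide)
    have hC0 : f (2, 2) ≠ 0 := by
      rw [← map_zero f]
      exact fun hcon => absurd (hf hcon) (by decide)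
    have hAB : f (2, 0) ≠ f (0, 2) := fun hcon => absurd (hf hcon) (by decide)
    have hAC : f (2, 0) ≠ f (2, 2) := fun hcon => absurd (hf hcon) (by decide)
    have hBC : f (0, 2) ≠ f (2, 2) := fun hcon => absurd (hf hcon) (by decide)
    have h2a : f (1, 0) + f (1, 0) = f (2, 0) := by
      rw [hmap, show ((1, 0) + (1, 0) : ZMod 4 × ZMod 4) = (2, 0) by decide]
    have h2b : f (0, 1) + f (0, 1) = f (0, 2) := by
      rw [hmap, show ((0, 1) + (0, 1) : ZMod 4 × ZMod 4) = (0, 2) by decide]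
    have h2c : f (1, 1) + f (1, 1) = f (2, 2) := by
      rw [hmap, show ((1, 1) + (1, 1) : ZMod 4 × ZMod 4) = (2, 2) by decide]
    have hstep : ∀ s : ZMod 4 × ZMod 4, f s + f s = 0 → f s ≠ 0 →
        f s ≠ WeierstrassCurve.Affine.Point.some _ _ hns1 → f s = WeierstrassCurve.Affine.Point.some _ _ hns0 ∨ f s = WeierstrassCurve.Affine.Point.some _ _ hnsl := by
      intro s hs1 hs2 hs3
      rcases htors _ hs1 with h' | h' | h' | h'
      · exact absurd h' hs2
      · exact Or.inl h'
      · exact absurd h' hs3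
      · exact Or.inr h'
    have hA := hstep (2, 0) hAA hA0 (fun hcon => hnohalf _ (h2a.trans hcon))
    have hB := hstep (0, 2) hBB hB0 (fun hcon => hnohalf _ (h2b.trans hcon))
    have hC := hstep (2, 2) hCC hC0 (fun hcon => hnohalf _ (h2c.trans hcon))
    rcases hA with hA | hA <;> rcases hB with hB | hB <;> rcases hC with hC | hC
    · exact hAB (hA.trans hB.symm)
    · exact hAB (hA.trans hB.symm)
    · exact hAC (hA.trans hC.symm)
    · exact hBC (hB.trans hC.symm)
    · exact hBC (hB.trans hC.symm)
    · exact hAC (hA.trans hC.symm)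
    · exact hAB (hA.trans hB.symm)
    · exact hAB (hA.trans hB.symm)
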